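/- arXiv:1102.1779 — 4 statements merged into one kernel-verified Lean document; each statement's English description precedes it below -/
import Mathlib

section
/- In ℚ[[z]], the identity (1/(1−z)) · (1 + ∑_{n≥0} 2^n z^{(n+1)^2}) = ∑_{m≥0} 2^{⌊√m⌋} z^m holds. -/
open PowerSeries

noncomputable instance : TopologicalSpace (PowerSeries ℚ) :=
  inferInstanceAs (TopologicalSpace ((Unit →₀ ℕ) → ℚ))

instance : T2Space (PowerSeries ℚ) :=
  inferInstanceAs (T2Space ((Unit →₀ ℕ) → ℚ))

/-- Coefficient function of the gap series. -/
noncomputable def gapCoeff (m : ℕ) : ℚ :=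
  if Nat.sqrt m * Nat.sqrt m = m ∧ m ≠ 0 then 2 ^ (Nat.sqrt m - 1) else 0

lemma gap_coeff_hasSum (m : ℕ) :
    HasSum (fun n : ℕ => PowerSeries.coeff m
        (PowerSeries.C (2 ^ n : ℚ) * (PowerSeries.X : PowerSeries ℚ) ^ ((n + 1) ^ 2)))
      (gapCoeff m) := by
  have hcoeff : ∀ n : ℕ,
      PowerSeries.coeff m
        (PowerSeries.C (2 ^ n : ℚ) * (PowerSeries.X : PowerSeries ℚ) ^ ((n + 1) ^ 2)) =
      if m = (n + 1) ^ 2 then (2 : ℚ) ^ n else 0 := by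
    intro n
    rw [PowerSeries.coeff_C_mul, PowerSeries.coeff_X_pow]
    split <;> simp
  by_cases hm : Nat.sqrt m * Nat.sqrt m = m ∧ m ≠ 0
  · obtain ⟨hsq, hne⟩ := hm
    have hk : 1 ≤ Nat.sqrt m := by
      rcases Nat.eq_zero_or_pos (Nat.sqrt m) with h0 | h0
      · exfalso; apply hne; rw [h0] at hsq; omega
      · exact h0
    set n₀ := Nat.sqrt m - 1 with hn₀
    have hm' : m = (n₀ + 1) ^ 2 := by
      have h1 : n₀ + 1 = Nat.sqrt m := by omega
      rw [h1, pow_two]; omega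
    have this := hasSum_single (f := fun n : ℕ =>
      PowerSeries.coeff m
        (PowerSeries.C (2 ^ n : ℚ) * (PowerSeries.X : PowerSeries ℚ) ^ ((n + 1) ^ 2))) n₀
      (by
        intro n hn
        simp only [hcoeff]
        rw [if_neg]
        intro hcontra
        apply hn
        have h2 : (n + 1) ^ 2 = (n₀ + 1) ^ 2 := by omega
        nlinarith [sq_nonneg (n - n₀)] )
    have h2 : (fun n : ℕ =>
        PowerSeries.coeff m
          (PowerSeries.C (2 ^ n : ℚ) * (PowerSeries.X : PowerSeries ℚ) ^ ((n + 1) ^ 2))) n₀ =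
        (2 : ℚ) ^ n₀ := by
      simp only [hcoeff]
      rw [if_pos hm']
    rw [show PowerSeries.coeff m (PowerSeries.C (2 ^ n₀ : ℚ) * (PowerSeries.X : PowerSeries ℚ) ^ ((n₀ + 1) ^ 2)) = (2 : ℚ) ^ n₀ from h2] at this
    have hgap : gapCoeff m = (2 : ℚ) ^ n₀ := by
      unfold gapCoeff
      rw [if_pos ⟨hsq, hne⟩]
    rw [hgap]
    exact this
  · have hzero : ∀ n : ℕ,
        PowerSeries.coeff m
          (PowerSeries.C (2 ^ n : ℚ) * (PowerSeries.X : PowerSeries ℚ) ^ ((n + 1) ^ 2)) = 0 := by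
      intro n
      rw [hcoeff n, if_neg]
      intro hcontra
      apply hm
      constructor
      · rw [hcontra, pow_two, Nat.sqrt_eq]
      · rw [hcontra]; positivity
    have hgap : gapCoeff m = 0 := by
      unfold gapCoeff; rw [if_neg hm]
    rw [hgap]
    simp only [hzero]
    exact hasSum_zero

lemma gap_hasSum :
    HasSum (fun n : ℕ => PowerSeries.C (2 ^ n : ℚ) *
        (PowerSeries.X : PowerSeries ℚ) ^ ((n + 1) ^ 2))
      (PowerSeries.mk gapCoeff) := by
  have key : HasSum
      (fun n : ℕ => (((PowerSeries.C (2 ^ n : ℚ) *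
        (PowerSeries.X : PowerSeries ℚ) ^ ((n + 1) ^ 2)) : PowerSeries ℚ) : (Unit →₀ ℕ) → ℚ))
      ((PowerSeries.mk gapCoeff : PowerSeries ℚ) : (Unit →₀ ℕ) → ℚ) := by
    refine Pi.hasSum.mpr ?_
    intro d
    have happ : ∀ f : PowerSeries ℚ,
        (f : (Unit →₀ ℕ) → ℚ) d = PowerSeries.coeff (d ()) f := by
      intro f
      rw [PowerSeries.coeff_def rfl, MvPowerSeries.coeff_apply]
    simp only [happ]
    rw [PowerSeries.coeff_mk]
    exact gap_coeff_hasSum (d ())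
  exact key

lemma sqrt_succ_of_sq (k m : ℕ) (hk : 1 ≤ k) (h : m + 1 = k * k) :
    Nat.sqrt m = k - 1 := by
  have h1 : (k - 1) ≤ Nat.sqrt m := by
    rw [Nat.le_sqrt]
    nlinarith [Nat.sub_add_cancel hk]
  have h2 : Nat.sqrt m < k := by
    rw [Nat.sqrt_lt]
    omega
  omega

lemma sqrt_succ_of_not_sq (m : ℕ)
    (h : ¬ (Nat.sqrt (m + 1) * Nat.sqrt (m + 1) = m + 1)) :
    Nat.sqrt (m + 1) = Nat.sqrt m := by
  have h1 : Nat.sqrt (m + 1) * Nat.sqrt (m + 1) ≤ m + 1 := by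
    have := Nat.sqrt_le' (m + 1)
    rwa [pow_two] at this
  have h2 : Nat.sqrt (m + 1) * Nat.sqrt (m + 1) ≤ m := by omega
  have h3 : Nat.sqrt (m + 1) ≤ Nat.sqrt m := by
    rw [Nat.le_sqrt]
    exact h2
  have h4 : Nat.sqrt m ≤ Nat.sqrt (m + 1) := Nat.sqrt_le_sqrt (by omega)
  omega

/-- In `ℚ⟦z⟧`, `(1/(1-z)) * (1 + ∑_{n≥0} 2^n z^{(n+1)^2}) = ∑_{m≥0} 2^{⌊√m⌋} z^m`. -/
theorem growth_series_sqrt :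
    ((1 - PowerSeries.X)⁻¹ : PowerSeries ℚ) *
        (1 + ∑' n : ℕ, PowerSeries.C (2 ^ n : ℚ) *
          (PowerSeries.X : PowerSeries ℚ) ^ ((n + 1) ^ 2)) =
      PowerSeries.mk (fun m => (2 : ℚ) ^ (Nat.sqrt m)) := by
  rw [gap_hasSum.tsum_eq]
  have key : (1 - PowerSeries.X : PowerSeries ℚ) *
      PowerSeries.mk (fun m => (2 : ℚ) ^ (Nat.sqrt m)) =
      1 + PowerSeries.mk gapCoeff := by
    ext m
    rw [sub_mul, one_mul, map_sub, map_add, PowerSeries.coeff_mk, PowerSeries.coeff_one]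
    cases m with
    | zero =>
        simp only [PowerSeries.coeff_zero_eq_constantCoeff, map_mul]
        simp [gapCoeff]
    | succ m =>
        rw [PowerSeries.coeff_succ_X_mul, PowerSeries.coeff_mk, PowerSeries.coeff_mk]
        simp only [Nat.succ_ne_zero, if_false, zero_add]
        by_cases hsq : Nat.sqrt (m + 1) * Nat.sqrt (m + 1) = m + 1
        · have hk : 1 ≤ Nat.sqrt (m + 1) := by
            rcases Nat.eq_zero_or_pos (Nat.sqrt (m + 1)) with h0 | h0
            · rw [h0] at hsq; omega
            · exact h0
          have hm : Nat.sqrt m = Nat.sqrt (m + 1) - 1 :=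
            sqrt_succ_of_sq (Nat.sqrt (m + 1)) m hk hsq.symm
          have hgap : gapCoeff (m + 1) = 2 ^ (Nat.sqrt (m + 1) - 1) := by
            unfold gapCoeff
            rw [if_pos ⟨hsq, Nat.succ_ne_zero m⟩]
          rw [hgap, hm]
          set k := Nat.sqrt (m + 1) with hkdef
          have hp : (2 : ℚ) ^ k = 2 ^ (k - 1) * 2 := by
            conv_lhs => rw [show k = (k - 1) + 1 by omega]
            rw [pow_succ]
          rw [hp]
          ring
        · have hm : Nat.sqrt (m + 1) = Nat.sqrt m := sqrt_succ_of_not_sq m hsq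
          have hgap : gapCoeff (m + 1) = 0 := by
            unfold gapCoeff
            rw [if_neg]
            intro hcontra
            exact hsq hcontra.1
          rw [hgap, hm]
          ring
  rw [← key, ← mul_assoc, PowerSeries.inv_mul_cancel, one_mul]
  simp
end

section
/- For every positive integer m, the number of tuples (k, i, j) with k ≥ 1, 1 ≤ i ≤ j, and k·(1 + i + j) = m equals the coefficient of z^m in ∑_{j≥1} z^{3j}/((1 − z^j)(1 − z^{2j})) in ℚ[[z]]. -/
open PowerSeries Finset

/-- The formal geometric series `∑_{n ∣ d} z^d = 1/(1 - z^n)`. -/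
noncomputable def geomSeries (n : ℕ) : PowerSeries ℚ :=
  PowerSeries.mk fun d => if n ∣ d then 1 else 0

lemma geomSeries_eq_inv (n : ℕ) (hn : 0 < n) :
    ((1 - PowerSeries.X ^ n)⁻¹ : PowerSeries ℚ) = geomSeries n := by
  symm
  rw [PowerSeries.eq_inv_iff_mul_eq_one]
  · ext d
    rw [mul_sub, mul_one, map_sub, PowerSeries.coeff_mul_X_pow',
      PowerSeries.coeff_one]
    simp only [geomSeries, PowerSeries.coeff_mk]
    by_cases hd : d = 0
    · subst hd
      simp [Nat.le_zero, hn.ne']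
    · rw [if_neg hd]
      by_cases h : n ≤ d
      · rw [if_pos h]
        have hiff : n ∣ d ↔ n ∣ d - n := by
          constructor
          · intro hdvd; exact Nat.dvd_sub hdvd dvd_rfl
          · intro hdvd
            have hd' : d - n + n = d := by omega
            rw [← hd']
            exact Nat.dvd_add hdvd dvd_rfl
        by_cases h1 : n ∣ d
        · rw [if_pos h1, if_pos (hiff.mp h1), sub_self]
        · rw [if_neg h1, if_neg (fun hh => h1 (hiff.mpr hh)), sub_zero]
      · rw [if_neg h, if_neg (fun hdvd => h (Nat.le_of_dvd (by omega) hdvd)), sub_zero]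
  · have : PowerSeries.constantCoeff (R := ℚ) (1 - PowerSeries.X ^ n) = 1 := by
      simp [map_sub, map_pow, hn.ne']
    rw [this]; norm_num

lemma coeff_term (n d : ℕ) (hn : 0 < n) :
    (PowerSeries.coeff d)
        ((PowerSeries.X : PowerSeries ℚ) ^ (3 * n) *
          ((1 - PowerSeries.X ^ n)⁻¹ : PowerSeries ℚ) *
          ((1 - PowerSeries.X ^ (2 * n))⁻¹ : PowerSeries ℚ)) =
      ((((antidiagonal (d - 3 * n)).filter
          fun pq => 3 * n ≤ d ∧ n ∣ pq.1 ∧ 2 * n ∣ pq.2).card : ℕ) : ℚ) := by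
  rw [geomSeries_eq_inv n hn, geomSeries_eq_inv (2 * n) (by positivity), mul_assoc,
    PowerSeries.coeff_X_pow_mul']
  by_cases h : 3 * n ≤ d
  · rw [if_pos h, PowerSeries.coeff_mul]
    simp only [geomSeries, PowerSeries.coeff_mk]
    rw [← Finset.sum_boole]
    apply Finset.sum_congr rfl
    intro pq _
    by_cases h1 : n ∣ pq.1 <;> by_cases h2 : 2 * n ∣ pq.2 <;> simp [h1, h2, h]
  · rw [if_neg h]
    rw [Finset.filter_false_of_mem (fun pq _ => by tauto)]
    simp

/-- For every positive integer `m`, the number of tuples `(k, i, j)` with `k ≥ 1`,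
`1 ≤ i ≤ j`, and `k(1 + i + j) = m` equals the coefficient of `z^m` in
`∑_{j≥1} z^{3j}/((1 - z^j)(1 - z^{2j}))` in `ℚ⟦z⟧`. -/
theorem serial_language_coeff (m : ℕ) (hm : 0 < m) :
    (Nat.card {t : ℕ × ℕ × ℕ //
        1 ≤ t.1 ∧ 1 ≤ t.2.1 ∧ t.2.1 ≤ t.2.2 ∧ t.1 * (1 + t.2.1 + t.2.2) = m} : ℚ) =
      PowerSeries.coeff m
        (∑' j : ℕ,
          (PowerSeries.X : PowerSeries ℚ) ^ (3 * (j + 1)) *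
            ((1 - PowerSeries.X ^ (j + 1))⁻¹ : PowerSeries ℚ) *
            ((1 - PowerSeries.X ^ (2 * (j + 1)))⁻¹ : PowerSeries ℚ)) := by
  classical
  set f : ℕ → PowerSeries ℚ := fun j =>
    (PowerSeries.X : PowerSeries ℚ) ^ (3 * (j + 1)) *
      ((1 - PowerSeries.X ^ (j + 1))⁻¹ : PowerSeries ℚ) *
      ((1 - PowerSeries.X ^ (2 * (j + 1)))⁻¹ : PowerSeries ℚ) with hf
  set N : ℕ → ℕ := fun j =>
    ((antidiagonal (m - 3 * (j + 1))).filter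
      fun pq => 3 * (j + 1) ≤ m ∧ (j + 1) ∣ pq.1 ∧ 2 * (j + 1) ∣ pq.2).card with hN
  have hcoeff : ∀ j d : ℕ, PowerSeries.coeff d (f j) =
      ((((antidiagonal (d - 3 * (j + 1))).filter
        fun pq => 3 * (j + 1) ≤ d ∧ (j + 1) ∣ pq.1 ∧ 2 * (j + 1) ∣ pq.2).card : ℕ) : ℚ) :=
    fun j d => coeff_term (j + 1) d (Nat.succ_pos j)
  -- summability
  have hsumm : Summable f := by
    apply Pi.summable.mpr
    intro x
    apply summable_of_ne_finset_zero (s := Finset.range (x () + 1))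
    intro j hj
    rw [Finset.mem_range, not_lt] at hj
    have : f j x = PowerSeries.coeff (x ()) (f j) := by
      rw [PowerSeries.coeff, MvPowerSeries.coeff_apply, ← Finsupp.unique_single x]
    rw [this, hcoeff]
    rw [Finset.filter_false_of_mem (fun pq _ => by omega)]
    simp
  have happ : PowerSeries.coeff m (∑' j, f j) = ∑' j, PowerSeries.coeff m (f j) := by
    have := tsum_apply (f := f) (x := (Finsupp.single () m : Unit →₀ ℕ)) hsumm
    simp [PowerSeries.coeff, MvPowerSeries.coeff_apply] at this ⊢
    exact this
  have htsum : ∑' j, PowerSeries.coeff m (f j) = ∑ j ∈ Finset.range m, ((N j : ℕ) : ℚ) := by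
    rw [tsum_eq_sum (s := Finset.range m)]
    · exact Finset.sum_congr rfl fun j _ => hcoeff j m
    · intro j hj
      rw [Finset.mem_range, not_lt] at hj
      rw [hcoeff]
      rw [Finset.filter_false_of_mem (fun pq _ => by omega)]
      simp
  rw [happ, htsum, ← Nat.cast_sum]
  congr 1
  -- now a Nat counting identity
  set T : Finset (ℕ × ℕ × ℕ) :=
    (Finset.Icc 1 m ×ˢ Finset.Icc 1 m ×ˢ Finset.Icc 1 m).filter
      (fun t => 1 ≤ t.1 ∧ 1 ≤ t.2.1 ∧ t.2.1 ≤ t.2.2 ∧ t.1 * (1 + t.2.1 + t.2.2) = m) with hT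
  have hset : {t : ℕ × ℕ × ℕ |
      1 ≤ t.1 ∧ 1 ≤ t.2.1 ∧ t.2.1 ≤ t.2.2 ∧ t.1 * (1 + t.2.1 + t.2.2) = m} = ↑T := by
    ext ⟨k, i, j⟩
    simp only [hT, Finset.coe_filter, Finset.mem_product, Finset.mem_Icc, Set.mem_setOf_eq]
    constructor
    · rintro ⟨hk, hi, hij, hkm⟩
      have h1 : 1 + i + j ≤ m := le_trans (Nat.le_mul_of_pos_left _ hk) (le_of_eq hkm)
      have h2 : k ≤ m := Nat.le_of_dvd hm ⟨1 + i + j, hkm.symm⟩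
      exact ⟨⟨⟨hk, h2⟩, ⟨hi, by omega⟩, ⟨by omega, by omega⟩⟩, hk, hi, hij, hkm⟩
    · rintro ⟨_, h⟩; exact h
  have hcard : Nat.card {t : ℕ × ℕ × ℕ //
      1 ≤ t.1 ∧ 1 ≤ t.2.1 ∧ t.2.1 ≤ t.2.2 ∧ t.1 * (1 + t.2.1 + t.2.2) = m} = T.card := by
    rw [show {t : ℕ × ℕ × ℕ //
        1 ≤ t.1 ∧ 1 ≤ t.2.1 ∧ t.2.1 ≤ t.2.2 ∧ t.1 * (1 + t.2.1 + t.2.2) = m} =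
      ↥{t : ℕ × ℕ × ℕ |
        1 ≤ t.1 ∧ 1 ≤ t.2.1 ∧ t.2.1 ≤ t.2.2 ∧ t.1 * (1 + t.2.1 + t.2.2) = m} from rfl,
      Nat.card_coe_set_eq, hset, Set.ncard_coe_finset]
  rw [hcard]
  -- fiberwise count
  rw [Finset.card_eq_sum_card_fiberwise (f := fun t => t.1 - 1) (t := Finset.range m)
    (fun x hx => by
      simp only [hT, Finset.mem_coe, Finset.mem_filter, Finset.mem_product, Finset.mem_Icc] at hx
      simp only [Finset.mem_coe, Finset.mem_range]
      omega)]
  apply Finset.sum_congr rfl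
  intro j hj
  rw [hN]
  apply Finset.card_bij'
    (i := fun t _ => ((j + 1) * (t.2.2 - t.2.1), 2 * (j + 1) * (t.2.1 - 1)))
    (j := fun pq _ => (j + 1, 1 + pq.2 / (2 * (j + 1)), 1 + pq.2 / (2 * (j + 1)) + pq.1 / (j + 1)))
  · -- hi : image in the antidiagonal filter
    rintro ⟨k, i, jj⟩ ht
    simp only [hT, Finset.mem_filter, Finset.mem_product, Finset.mem_Icc] at ht
    obtain ⟨⟨-, ⟨hk, hi, hij, hkm⟩⟩, hfib⟩ := ht
    have hk1 : k = j + 1 := by omega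
    subst hk1
    obtain ⟨b, rfl⟩ : ∃ b, i = b + 1 := ⟨i - 1, by omega⟩
    obtain ⟨a, rfl⟩ : ∃ a, jj = (b + 1) + a := ⟨jj - (b + 1), by omega⟩
    simp only [Finset.mem_filter, Finset.HasAntidiagonal.mem_antidiagonal]
    have hsub1 : (b + 1) + a - (b + 1) = a := by omega
    have hsub2 : b + 1 - 1 = b := by omega
    simp only [hsub1, hsub2]
    have hprod : (j + 1) * (1 + (b + 1) + ((b + 1) + a)) =
        3 * (j + 1) + ((j + 1) * a + 2 * (j + 1) * b) := by ring
    exact ⟨by omega, by omega, Dvd.intro _ rfl, Dvd.intro _ rfl⟩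
  · -- hj : inverse maps into T with correct fiber
    rintro ⟨p, q⟩ hpq
    simp only [Finset.mem_filter, Finset.HasAntidiagonal.mem_antidiagonal] at hpq
    obtain ⟨hsum, h3, ⟨a, rfl⟩, ⟨b, rfl⟩⟩ := hpq
    have e1 : 2 * (j + 1) * b / (2 * (j + 1)) = b := Nat.mul_div_cancel_left b (by omega)
    have e2 : (j + 1) * a / (j + 1) = a := Nat.mul_div_cancel_left a (by omega)
    simp only [hT, Finset.mem_filter, Finset.mem_product, Finset.mem_Icc, e1, e2]
    have hprod : (j + 1) * (1 + (1 + b) + (1 + b + a)) =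
        3 * (j + 1) + ((j + 1) * a + 2 * (j + 1) * b) := by ring
    have ha1 : a ≤ (j + 1) * a := Nat.le_mul_of_pos_left a (by omega)
    have hb1 : b ≤ 2 * (j + 1) * b := Nat.le_mul_of_pos_left b (by omega)
    refine ⟨⟨⟨⟨by omega, by omega⟩, ⟨by omega, by omega⟩, by omega, by omega⟩,
      by omega, by omega, by omega, by omega⟩, by omega⟩
  · -- left inverse
    rintro ⟨k, i, jj⟩ ht
    simp only [hT, Finset.mem_filter, Finset.mem_product, Finset.mem_Icc] at ht
    obtain ⟨⟨-, ⟨hk, hi, hij, hkm⟩⟩, hfib⟩ := ht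
    have hk1 : k = j + 1 := by omega
    subst hk1
    obtain ⟨b, rfl⟩ : ∃ b, i = b + 1 := ⟨i - 1, by omega⟩
    obtain ⟨a, rfl⟩ : ∃ a, jj = (b + 1) + a := ⟨jj - (b + 1), by omega⟩
    have hsub1 : (b + 1) + a - (b + 1) = a := by omega
    have hsub2 : b + 1 - 1 = b := by omega
    have e1 : 2 * (j + 1) * b / (2 * (j + 1)) = b := Nat.mul_div_cancel_left b (by omega)
    have e2 : (j + 1) * a / (j + 1) = a := Nat.mul_div_cancel_left a (by omega)
    simp [hsub1, hsub2, e1, e2, Prod.mk.injEq]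
    omega
  · -- right inverse
    rintro ⟨p, q⟩ hpq
    simp only [Finset.mem_filter, Finset.HasAntidiagonal.mem_antidiagonal] at hpq
    obtain ⟨hsum, h3, ⟨a, rfl⟩, ⟨b, rfl⟩⟩ := hpq
    have e1 : 2 * (j + 1) * b / (2 * (j + 1)) = b := Nat.mul_div_cancel_left b (by omega)
    have e2 : (j + 1) * a / (j + 1) = a := Nat.mul_div_cancel_left a (by omega)
    have e3 : 1 + b + a - (1 + b) = a := by omega
    have e4 : 1 + b - 1 = b := by omega
    simp [e1, e2, e3, e4, Prod.mk.injEq]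
end

section
/- In ℚ[[z]], the sum ∑_{j≥1} z^j / ∏_{n=1}^{j} (1 − z^n) equals ∑_{m≥1} p(m) z^m, where p(m) is the number of partitions of m. -/
open PowerSeries

namespace PartitionSeriesAux

noncomputable section

open Finset

open scoped Classical

instance : T2Space (PowerSeries ℚ) := inferInstanceAs (T2Space ((Unit →₀ ℕ) → ℚ))

/-- A convenience constructor for the power series whose coefficients indicate a subset. -/
def indicatorSeries (α : Type*) [Semiring α] (s : Set ℕ) : PowerSeries α :=
  PowerSeries.mk fun n => if n ∈ s then 1 else 0

variable {α : Type*}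

theorem coeff_indicator (s : Set ℕ) [Semiring α] (n : ℕ) :
    coeff n (indicatorSeries α s) = if n ∈ s then 1 else 0 :=
  coeff_mk _ _

theorem constantCoeff_indicator (s : Set ℕ) [Semiring α] :
    constantCoeff (indicatorSeries α s) = if 0 ∈ s then 1 else 0 :=
  rfl

theorem num_series' [Field α] (i : ℕ) :
    (1 - (X : PowerSeries α) ^ (i + 1))⁻¹ = indicatorSeries α {k | i + 1 ∣ k} := by
  rw [PowerSeries.inv_eq_iff_mul_eq_one]
  · ext n
    cases n with
    | zero => simp [mul_sub, zero_pow, constantCoeff_indicator]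
    | succ n =>
      simp only [coeff_one, if_false, mul_sub, mul_one, coeff_indicator,
        LinearMap.map_sub, reduceCtorEq]
      simp_rw [coeff_mul, coeff_X_pow, coeff_indicator, @boole_mul _ _ _ _]
      rw [@sum_ite _ _ _ _ _ (fun _ => Classical.propDecidable _), sum_ite]
      simp only [filter_filter, sum_const_zero, add_zero, sum_const, nsmul_eq_mul, mul_one,
        sub_eq_iff_eq_add, zero_add]
      symm
      split_ifs with h
      · suffices #{a ∈ antidiagonal (n + 1) | i + 1 ∣ a.fst ∧ a.snd = i + 1} = 1 by
          simp only [Set.mem_setOf_eq]; convert congr_arg ((↑) : ℕ → α) this; norm_cast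
        rw [card_eq_one]
        cases' h with p hp
        refine ⟨((i + 1) * (p - 1), i + 1), ?_⟩
        ext ⟨a₁, a₂⟩
        simp only [mem_filter, Prod.mk.injEq, HasAntidiagonal.mem_antidiagonal, mem_singleton]
        constructor
        · rintro ⟨a_left, ⟨a, rfl⟩, rfl⟩
          refine ⟨?_, rfl⟩
          rw [Nat.mul_sub_left_distrib, ← hp, ← a_left, mul_one, Nat.add_sub_cancel]
        · rintro ⟨rfl, rfl⟩
          match p with
          | 0 => rw [mul_zero] at hp; cases hp
          | p + 1 => rw [hp]; simp [mul_add]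
      · suffices #{a ∈ antidiagonal (n + 1) | i + 1 ∣ a.fst ∧ a.snd = i + 1} = 0 by
          simp only [Set.mem_setOf_eq]; convert congr_arg ((↑) : ℕ → α) this; norm_cast
        rw [card_eq_zero]
        apply eq_empty_of_forall_notMem
        simp only [Prod.forall, mem_filter, not_and, HasAntidiagonal.mem_antidiagonal]
        rintro _ h₁ h₂ ⟨a, rfl⟩ rfl
        apply h
        simp [← h₂]
  · simp [zero_pow]

-- The main workhorse (from the Archive, Wiedijk100Theorems/Partition.lean).
theorem partialGF_prop (α : Type*) [CommSemiring α] (n : ℕ) (s : Finset ℕ) (hs : ∀ i ∈ s, 0 < i)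
    (c : ℕ → Set ℕ) (hc : ∀ i, i ∉ s → 0 ∈ c i) :
    #{p : n.Partition | (∀ j, p.parts.count j ∈ c j) ∧ ∀ j ∈ p.parts, j ∈ s} =
      coeff n (∏ i ∈ s, indicatorSeries α ((· * i) '' c i)) := by
  simp_rw [coeff_prod, coeff_indicator, prod_boole, sum_boole]
  apply congr_arg
  simp only [mem_univ, forall_true_left, not_and, not_forall, exists_prop,
    Set.mem_image, not_exists]
  set φ : (a : Nat.Partition n) →
    a ∈ filter (fun p ↦ (∀ (j : ℕ), Multiset.count j p.parts ∈ c j) ∧ ∀ j ∈ p.parts, j ∈ s) univ →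
    ℕ →₀ ℕ := fun p _ => {
      toFun := fun i => Multiset.count i p.parts • i
      support := Finset.filter (fun i => i ≠ 0) p.parts.toFinset
      mem_support_toFun := fun a => by
        simp only [smul_eq_mul, ne_eq, mul_eq_zero, Multiset.count_eq_zero]
        rw [not_or, not_not]
        simp only [Multiset.mem_toFinset, not_not, mem_filter] }
  refine Finset.card_bij φ ?_ ?_ ?_
  · intro a ha
    simp only [φ, not_forall, not_exists, not_and, exists_prop, mem_filter]
    rw [mem_finsuppAntidiag]
    dsimp only [ne_eq, smul_eq_mul, id_eq, eq_mpr_eq_cast, le_eq_subset, Finsupp.coe_mk]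
    simp only [mem_univ, forall_true_left, not_and, not_forall, exists_prop,
      mem_filter, true_and] at ha
    refine ⟨⟨?_, fun i ↦ ?_⟩, fun i _ ↦ ⟨a.parts.count i, ha.1 i, rfl⟩⟩
    · conv_rhs => simp [← a.parts_sum]
      rw [sum_multiset_count_of_subset _ s]
      · simp only [smul_eq_mul]
      · intro i
        simp only [Multiset.mem_toFinset, not_not, mem_filter]
        apply ha.2
    · simp only [ne_eq, Multiset.mem_toFinset, not_not, mem_filter, and_imp]
      exact fun hi _ ↦ ha.2 i hi
  · try dsimp only
    intro p₁ hp₁ p₂ hp₂ h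
    apply Nat.Partition.ext
    simp only [true_and, mem_univ, mem_filter] at hp₁ hp₂
    ext i
    simp only [φ, ne_eq, Multiset.mem_toFinset, not_not, smul_eq_mul, Finsupp.mk.injEq] at h
    by_cases hi : i = 0
    · rw [hi]
      rw [Multiset.count_eq_zero_of_notMem]
      · rw [Multiset.count_eq_zero_of_notMem]
        intro a; exact Nat.lt_irrefl 0 (hs 0 (hp₂.2 0 a))
      intro a; exact Nat.lt_irrefl 0 (hs 0 (hp₁.2 0 a))
    · rw [← mul_left_inj' hi]
      rw [funext_iff] at h
      exact h.2 i
  · simp only [φ, mem_filter, mem_finsuppAntidiag, mem_univ, exists_prop, true_and, and_assoc]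
    rintro f ⟨hf, hf₃, hf₄⟩
    have hf' : f ∈ finsuppAntidiag s n := mem_finsuppAntidiag.mpr ⟨hf, hf₃⟩
    simp only [mem_finsuppAntidiag] at hf'
    refine ⟨⟨∑ i ∈ s, Multiset.replicate (f i / i) i, ?_, ?_⟩, ?_, ?_, ?_⟩
    · intro i hi
      simp only [exists_prop, Multiset.mem_sum, mem_map, Function.Embedding.coeFn_mk] at hi
      rcases hi with ⟨t, ht, z⟩
      apply hs
      rwa [Multiset.eq_of_mem_replicate z]
    · simp_rw [Multiset.sum_sum, Multiset.sum_replicate, Nat.nsmul_eq_mul]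
      rw [← hf'.1]
      refine sum_congr rfl fun i hi => Nat.div_mul_cancel ?_
      rcases hf₄ i hi with ⟨w, _, hw₂⟩
      rw [← hw₂]
      exact dvd_mul_left _ _
    · intro i
      simp_rw [Multiset.count_sum', Multiset.count_replicate, sum_ite_eq']
      split_ifs with h
      · rcases hf₄ i h with ⟨w, hw₁, hw₂⟩
        rwa [← hw₂, Nat.mul_div_cancel _ (hs i h)]
      · exact hc _ h
    · intro i hi
      rw [Multiset.mem_sum] at hi
      rcases hi with ⟨j, hj₁, hj₂⟩
      rwa [Multiset.eq_of_mem_replicate hj₂]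
    · ext i
      simp_rw [Multiset.count_sum', Multiset.count_replicate, sum_ite_eq']
      simp only [ne_eq, Multiset.mem_toFinset, not_not, smul_eq_mul, ite_mul,
        zero_mul, Finsupp.coe_mk]
      split_ifs with h
      · apply Nat.div_mul_cancel
        rcases hf₄ i h with ⟨w, _, hw₂⟩
        apply Dvd.intro_left _ hw₂
      · apply symm
        rw [← Finsupp.notMem_support_iff]
        exact notMem_mono hf'.2 h

/-- inverse of the finite product equals product of inverses -/
theorem prod_inv (j : ℕ) :
    ((∏ n ∈ range (j + 1), (1 - (X : PowerSeries ℚ) ^ (n + 1)))⁻¹ : PowerSeries ℚ) =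
      ∏ n ∈ range (j + 1), (1 - (X : PowerSeries ℚ) ^ (n + 1))⁻¹ := by
  rw [PowerSeries.inv_eq_iff_mul_eq_one]
  · rw [← Finset.prod_mul_distrib]
    rw [Finset.prod_eq_one]
    intro i _
    apply PowerSeries.inv_mul_cancel
    simp [zero_pow]
  · simp [zero_pow]

theorem X_pow_mul_num (j : ℕ) :
    (X : PowerSeries ℚ) ^ (j + 1) * (1 - (X : PowerSeries ℚ) ^ (j + 1))⁻¹ =
      indicatorSeries ℚ ((· * (j + 1)) '' {n | 0 < n}) := by
  rw [num_series', mul_comm]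
  ext m
  rw [PowerSeries.coeff_mul_X_pow']
  simp only [coeff_indicator, Set.mem_setOf_eq]
  by_cases h1 : j + 1 ≤ m
  · rw [if_pos h1]
    have himage : m ∈ (· * (j + 1)) '' {n | 0 < n} ↔ (j + 1) ∣ m - (j + 1) := by
      constructor
      · rintro ⟨n, hn, rfl⟩
        cases n with
        | zero => exact absurd hn (lt_irrefl 0)
        | succ k =>
          refine ⟨k, ?_⟩
          show (k + 1) * (j + 1) - (j + 1) = (j + 1) * k
          rw [add_mul, one_mul, Nat.add_sub_cancel, mul_comm]
      · rintro ⟨d, hd⟩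
        refine ⟨d + 1, Nat.succ_pos d, ?_⟩
        show (d + 1) * (j + 1) = m
        have hc : m - (j + 1) + (j + 1) = m := Nat.sub_add_cancel h1
        rw [add_mul, one_mul, mul_comm d, ← hd, hc]
    by_cases h2 : (j + 1) ∣ m - (j + 1)
    · rw [if_pos h2, if_pos (himage.mpr h2)]
    · rw [if_neg h2, if_neg fun hc => h2 (himage.mp hc)]
  · rw [if_neg h1, if_neg]
    rintro ⟨n, hn, rfl⟩
    apply h1
    calc j + 1 = 1 * (j + 1) := (one_mul _).symm
    _ ≤ n * (j + 1) := Nat.mul_le_mul_right _ hn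

def c (j : ℕ) : ℕ → Set ℕ := fun i => if i = j + 1 then {n | 0 < n} else Set.univ

theorem c_self (j : ℕ) : c j (j + 1) = {n | 0 < n} := if_pos rfl

theorem c_other {j i : ℕ} (h : i ≠ j + 1) : c j i = Set.univ := if_neg h

def succEmb : ℕ ↪ ℕ := ⟨Nat.succ, Nat.succ_injective⟩

theorem term_eq (j : ℕ) :
    (X : PowerSeries ℚ) ^ (j + 1) *
        ((∏ n ∈ range (j + 1), (1 - (X : PowerSeries ℚ) ^ (n + 1)))⁻¹ : PowerSeries ℚ) =
      ∏ i ∈ (range (j + 1)).map succEmb, indicatorSeries ℚ ((· * i) '' c j i) := by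
  rw [prod_inv, Finset.prod_map]
  simp only [succEmb, Function.Embedding.coeFn_mk, Nat.succ_eq_add_one]
  rw [Finset.prod_range_succ, Finset.prod_range_succ]
  have hlast : indicatorSeries ℚ ((· * (j + 1)) '' c j (j + 1)) =
      (X : PowerSeries ℚ) ^ (j + 1) * (1 - (X : PowerSeries ℚ) ^ (j + 1))⁻¹ := by
    rw [c_self]
    exact (X_pow_mul_num j).symm
  have hfirst : ∀ n ∈ range j, indicatorSeries ℚ ((· * (n + 1)) '' c j (n + 1)) =
      (1 - (X : PowerSeries ℚ) ^ (n + 1))⁻¹ := by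
    intro n hn
    have hne : c j (n + 1) = Set.univ :=
      c_other (by simp only [mem_range] at hn; omega)
    have himg : ((· * (n + 1)) '' Set.univ : Set ℕ) = {k | n + 1 ∣ k} := by
      ext k
      constructor
      · rintro ⟨a, -, rfl⟩
        exact Dvd.intro_left a rfl
      · rintro ⟨a, rfl⟩
        exact ⟨a, trivial, mul_comm _ _⟩
    rw [num_series', hne, himg]
  rw [Finset.prod_congr rfl hfirst, hlast]
  ring

theorem coeff_term (m j : ℕ) :
    coeff m ((X : PowerSeries ℚ) ^ (j + 1) *
        ((∏ n ∈ range (j + 1), (1 - (X : PowerSeries ℚ) ^ (n + 1)))⁻¹ : PowerSeries ℚ)) =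
      #{p : m.Partition | j + 1 ∈ p.parts ∧ ∀ k ∈ p.parts, k ≤ j + 1} := by
  have hs : ∀ i ∈ (range (j + 1)).map succEmb, 0 < i := by
    intro i hi
    simp only [mem_map, succEmb, Function.Embedding.coeFn_mk] at hi
    obtain ⟨a, -, rfl⟩ := hi
    exact Nat.succ_pos a
  have hc : ∀ i, i ∉ (range (j + 1)).map succEmb → 0 ∈ c j i := by
    intro i hi
    have : i ≠ j + 1 := by
      intro h
      apply hi
      simp only [mem_map, succEmb, Function.Embedding.coeFn_mk, h]
      exact ⟨j, by simp, rfl⟩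
    rw [c_other this]
    trivial
  rw [term_eq, ← partialGF_prop ℚ m ((range (j + 1)).map succEmb) hs (c j) hc]
  congr 2
  apply Finset.filter_congr
  intro p _
  constructor
  · rintro ⟨h1, h2⟩
    constructor
    · have := h1 (j + 1)
      simp only [c, if_pos rfl, Set.mem_setOf_eq] at this
      exact Multiset.count_pos.mp this
    · intro k hk
      have := h2 k hk
      simp only [mem_map, mem_range, succEmb, Function.Embedding.coeFn_mk] at this
      obtain ⟨a, ha, rfl⟩ := this
      omega
  · rintro ⟨h1, h2⟩
    constructor
    · intro k
      by_cases hk : k = j + 1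
      · subst hk
        rw [c_self]
        exact Multiset.count_pos.mpr h1
      · rw [c_other hk]
        trivial
    · intro k hk
      simp only [mem_map, mem_range, succEmb, Function.Embedding.coeFn_mk]
      have hkpos : 0 < k := p.parts_pos hk
      have hk2 : k ≤ j + 1 := h2 k hk
      exact ⟨k - 1, by omega, by omega⟩

theorem sup_mem {s : Multiset ℕ} (h : s ≠ 0) : s.sup ∈ s := by
  have hne : s.toFinset.Nonempty := Multiset.toFinset_nonempty.mpr h
  obtain ⟨b, hb, hbs⟩ := Finset.exists_mem_eq_sup s.toFinset hne id
  have key : s.toFinset.sup id = s.sup := by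
    rw [Finset.sup_def, Multiset.map_id, Multiset.toFinset_val, Multiset.sup_dedup]
  rw [← key, hbs]
  exact Multiset.mem_toFinset.mp hb

theorem sum_card (m : ℕ) (hm : 0 < m) :
    ∑ j ∈ range m, #{p : m.Partition | j + 1 ∈ p.parts ∧ ∀ k ∈ p.parts, k ≤ j + 1} =
      Fintype.card (Nat.Partition m) := by
  have hfacts : ∀ p : m.Partition, p.parts.sup ∈ p.parts ∧ 1 ≤ p.parts.sup ∧ p.parts.sup ≤ m := by
    intro p
    have hne : p.parts ≠ 0 := by
      intro h
      rw [← p.parts_sum, h] at hm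
      simp at hm
    have hmem : p.parts.sup ∈ p.parts := sup_mem hne
    refine ⟨hmem, p.parts_pos hmem, ?_⟩
    have := Multiset.single_le_sum (fun x _ => Nat.zero_le x) _ hmem
    rwa [p.parts_sum] at this
  have hmap : ∀ p : m.Partition, p ∈ (univ : Finset m.Partition) →
      p.parts.sup - 1 ∈ range m := by
    intro p _
    obtain ⟨-, h1, h2⟩ := hfacts p
    simp only [mem_range]
    omega
  rw [← Finset.card_univ, Finset.card_eq_sum_card_fiberwise hmap]
  apply Finset.sum_congr rfl
  intro j _
  congr 1
  apply Finset.filter_congr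
  intro p _
  obtain ⟨hmem, h1, h2⟩ := hfacts p
  constructor
  · rintro ⟨hj1, hj2⟩
    have hle : p.parts.sup ≤ j + 1 := Multiset.sup_le.mpr hj2
    have hge : j + 1 ≤ p.parts.sup := Multiset.le_sup hj1
    omega
  · intro hj
    have hsup : p.parts.sup = j + 1 := by omega
    exact ⟨hsup ▸ hmem, fun k hk => hsup ▸ Multiset.le_sup hk⟩

theorem hasSum_of_coeff {f : ℕ → PowerSeries ℚ} {F : PowerSeries ℚ}
    (h : ∀ m : ℕ, HasSum (fun j => coeff m (f j)) (coeff m F)) : HasSum f F := by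
  have key : HasSum (fun j => (f j : (Unit →₀ ℕ) → ℚ)) (F : (Unit →₀ ℕ) → ℚ) := by
    refine Pi.hasSum.mpr ?_
    intro i
    have hi : i = Finsupp.single () (i ()) := (Finsupp.unique_single i).trans (by congr)
    have := h (i ())
    convert this using 2 <;> rw [hi] <;>
      simp [PowerSeries.coeff, MvPowerSeries.coeff, LinearMap.proj] <;> rfl
  exact key

end

end PartitionSeriesAux

/-- In `ℚ⟦z⟧`, `∑_{j≥1} z^j / ∏_{n=1}^{j} (1 - z^n) = ∑_{m≥1} p(m) z^m`, where `p(m)` is the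
number of partitions of `m`. -/
theorem partition_series :
    (∑' j : ℕ, (PowerSeries.X : PowerSeries ℚ) ^ (j + 1) *
        ((∏ n ∈ Finset.range (j + 1), (1 - PowerSeries.X ^ (n + 1)))⁻¹ : PowerSeries ℚ)) =
      PowerSeries.mk
        (fun m => if m = 0 then 0 else (Fintype.card (Nat.Partition m) : ℚ)) := by
  classical
  apply HasSum.tsum_eq
  apply PartitionSeriesAux.hasSum_of_coeff
  intro m
  rcases Nat.eq_zero_or_pos m with rfl | hm
  · have h0 : ∀ j : ℕ, PowerSeries.coeff 0 ((PowerSeries.X : PowerSeries ℚ) ^ (j + 1) *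
        ((∏ n ∈ Finset.range (j + 1), (1 - PowerSeries.X ^ (n + 1)))⁻¹ : PowerSeries ℚ)) = 0 := by
      intro j
      rw [PowerSeries.coeff_zero_eq_constantCoeff, map_mul, map_pow, PowerSeries.constantCoeff_X]
      simp
    simp only [h0, PowerSeries.coeff_mk, if_pos rfl]
    exact hasSum_zero
  · have hvanish : ∀ j ∉ Finset.range m,
        PowerSeries.coeff m ((PowerSeries.X : PowerSeries ℚ) ^ (j + 1) *
          ((∏ n ∈ Finset.range (j + 1), (1 - PowerSeries.X ^ (n + 1)))⁻¹ : PowerSeries ℚ)) = 0 := by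
      intro j hj
      rw [mul_comm, PowerSeries.coeff_mul_X_pow', if_neg]
      simp only [Finset.mem_range, not_lt] at hj
      omega
    have hsum := hasSum_sum_of_ne_finset_zero (L := SummationFilter.unconditional ℕ) hvanish
    have heq : (∑ j ∈ Finset.range m,
        PowerSeries.coeff m ((PowerSeries.X : PowerSeries ℚ) ^ (j + 1) *
          ((∏ n ∈ Finset.range (j + 1), (1 - PowerSeries.X ^ (n + 1)))⁻¹ : PowerSeries ℚ))) =
        PowerSeries.coeff m (PowerSeries.mk
          (fun m => if m = 0 then 0 else (Fintype.card (Nat.Partition m) : ℚ))) := by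
      rw [PowerSeries.coeff_mk, if_neg (by omega)]
      rw [← PartitionSeriesAux.sum_card m hm]
      push_cast
      apply Finset.sum_congr rfl
      intro j _
      rw [PartitionSeriesAux.coeff_term]
    rw [← heq]
    exact hsum
end

section
/- For every integer n ≥ 4, the number of quadruples (i, j, k, l) of positive integers with i + j + k + l = n and (i = k or j = l) equals the coefficient of z^n in z^4(1 + 3z)/((1 − z)^3 (1 + z)^2) in ℚ[[z]]. -/
open PowerSeries Finset

def TT : ℕ → ℕ := fun n => ∑ i ∈ range n, (n - 3 - 2*i)

lemma TT_rec (n : ℕ) : TT (n+2) = TT n + (n-1) := by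
  unfold TT
  rw [Finset.sum_range_succ']
  rw [Finset.sum_congr rfl (fun i _ => show n+2-3-2*(i+1) = n-3-2*i by omega)]
  rw [Finset.sum_range_succ, show n-3-2*n = 0 by omega, add_zero,
    show n+2-3-2*0 = n-1 by omega]

lemma TT_even (a : ℕ) : 4 * TT (a+a) = (a+a-2)*(a+a-2) := by
  induction a with
  | zero => decide
  | succ b ih =>
    have hr : TT (b+b+2) = TT (b+b) + (b+b-1) := TT_rec (b+b)
    have he : b+1+(b+1) = (b+b)+2 := by omega
    rw [he, hr]
    rcases Nat.eq_zero_or_pos b with rfl | hb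
    · decide
    · have h1 : b+b-1+1 = b+b := by omega
      have h2 : b+b+2-2 = b+b := by omega
      rw [h2]
      zify [show 2 ≤ b+b by omega, show 1 ≤ b+b by omega] at *
      linear_combination ih

lemma TT_odd (a : ℕ) : 4 * TT (2*a+1) = (2*a)*(2*a-2) := by
  induction a with
  | zero => decide
  | succ b ih =>
    have hr : TT (2*b+1+2) = TT (2*b+1) + (2*b+1-1) := TT_rec (2*b+1)
    have he : 2*(b+1)+1 = 2*b+1+2 := by omega
    rw [he, hr]
    rcases Nat.eq_zero_or_pos b with rfl | hb
    · decide
    · zify [show 2 ≤ 2*b by omega, show 2 ≤ 2*(b+1) by omega, show 1 ≤ 2*b+1 by omega] at *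
      linear_combination ih

def PA (n : ℕ) : Finset (ℕ × ℕ) :=
  (range (n+1) ×ˢ range (n+1)).filter (fun p => 1 ≤ p.1 ∧ 1 ≤ p.2 ∧ 2*p.1 + p.2 + 1 ≤ n)

lemma PA_fiber (n b : ℕ) :
    ((PA n).filter (fun a => a.1 = b)).card = if 1 ≤ b then n - 1 - 2*b else 0 := by
  split_ifs with hb
  · have key : ((PA n).filter (fun a => a.1 = b)).card = (Finset.Icc 1 (n-1-2*b)).card := by
      apply Finset.card_nbij' (i := fun p => p.2) (j := fun j => (b, j))
      · intro p hp
        simp only [PA, mem_coe, mem_filter, mem_product, mem_range] at hp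
        simp only [mem_coe, mem_Icc]
        omega
      · intro j hj
        simp only [mem_coe, mem_Icc] at hj
        simp [PA, mem_filter, mem_product, mem_range]
        omega
      · intro p hp
        simp only [PA, mem_coe, mem_filter, mem_product, mem_range] at hp
        obtain ⟨x, y⟩ := p
        simp only at hp ⊢
        rw [hp.2]
      · intro j hj
        rfl
    rw [key, Nat.card_Icc]
    omega
  · rw [Finset.card_eq_zero, Finset.eq_empty_iff_forall_notMem]
    intro p hp
    simp only [PA, mem_filter, mem_product, mem_range] at hp
    omega

lemma PA_card (n : ℕ) : (PA n).card = TT n := by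
  rw [Finset.card_eq_sum_card_fiberwise (f := Prod.fst) (t := range (n+1))
    (fun x hx => by simp only [PA, mem_coe, mem_filter, mem_product, mem_range] at hx ⊢; omega)]
  have h2 : ∑ b ∈ range (n+1), ((PA n).filter (fun a => Prod.fst a = b)).card
      = ∑ b ∈ range (n+1), (if 1 ≤ b then n - 1 - 2*b else 0) :=
    Finset.sum_congr rfl (fun b _ => PA_fiber n b)
  rw [h2]
  rw [Finset.sum_range_succ' (fun i => if 1 ≤ i then n - 1 - 2*i else 0) n]
  rw [if_neg (by omega : ¬ (1:ℕ) ≤ 0), add_zero]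
  unfold TT
  apply Finset.sum_congr rfl
  intro i _
  rw [if_pos (by omega)]
  omega

def box4 (n : ℕ) : Finset (ℕ × ℕ × ℕ × ℕ) :=
  range (n+1) ×ˢ range (n+1) ×ˢ range (n+1) ×ˢ range (n+1)

def base (n : ℕ) (t : ℕ × ℕ × ℕ × ℕ) : Prop :=
  1 ≤ t.1 ∧ 1 ≤ t.2.1 ∧ 1 ≤ t.2.2.1 ∧ 1 ≤ t.2.2.2 ∧ t.1 + t.2.1 + t.2.2.1 + t.2.2.2 = n

instance (n : ℕ) (t : ℕ × ℕ × ℕ × ℕ) : Decidable (base n t) := by unfold base; infer_instance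

def QQ (n : ℕ) : Finset (ℕ × ℕ × ℕ × ℕ) :=
  (box4 n).filter (fun t => base n t ∧ (t.1 = t.2.2.1 ∨ t.2.1 = t.2.2.2))

def QA (n : ℕ) : Finset (ℕ × ℕ × ℕ × ℕ) :=
  (box4 n).filter (fun t => base n t ∧ t.1 = t.2.2.1)

def QB (n : ℕ) : Finset (ℕ × ℕ × ℕ × ℕ) :=
  (box4 n).filter (fun t => base n t ∧ t.2.1 = t.2.2.2)

lemma QA_card (n : ℕ) : (QA n).card = TT n := by
  rw [← PA_card n]
  apply Finset.card_nbij' (i := fun t => (t.1, t.2.1))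
    (j := fun p => (p.1, p.2, p.1, n - (2*p.1 + p.2)))
  · intro t ht
    obtain ⟨i, j, k, l⟩ := t
    simp only [QA, QB, PA, mem_coe, mem_inter, mem_filter] at ht ⊢
    simp [QA, base, box4, PA, mem_filter, mem_product, mem_range] at ht ⊢
    omega
  · intro p hp
    obtain ⟨x, y⟩ := p
    simp only [QA, QB, PA, mem_coe, mem_inter, mem_filter] at hp ⊢
    simp [QA, base, box4, PA, mem_filter, mem_product, mem_range] at hp ⊢
    omega
  · intro t ht
    obtain ⟨i, j, k, l⟩ := t
    simp only [QA, QB, PA, mem_coe, mem_inter, mem_filter] at ht ⊢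
    simp [QA, base, box4, mem_filter, mem_product, mem_range, Prod.ext_iff] at ht ⊢
    omega
  · intro p hp
    rfl

lemma QB_card (n : ℕ) : (QB n).card = TT n := by
  rw [← PA_card n]
  apply Finset.card_nbij' (i := fun t => (t.2.1, t.1))
    (j := fun p => (p.2, p.1, n - (p.2 + 2*p.1), p.1))
  · intro t ht
    obtain ⟨i, j, k, l⟩ := t
    simp only [QA, QB, PA, mem_coe, mem_inter, mem_filter] at ht ⊢
    simp [QB, base, box4, PA, mem_filter, mem_product, mem_range] at ht ⊢
    omega
  · intro p hp
    obtain ⟨x, y⟩ := p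
    simp only [QA, QB, PA, mem_coe, mem_inter, mem_filter] at hp ⊢
    simp [QB, base, box4, PA, mem_filter, mem_product, mem_range] at hp ⊢
    omega
  · intro t ht
    obtain ⟨i, j, k, l⟩ := t
    simp only [QA, QB, PA, mem_coe, mem_inter, mem_filter] at ht ⊢
    simp [QB, base, box4, mem_filter, mem_product, mem_range, Prod.ext_iff] at ht ⊢
    omega
  · intro p hp
    rfl

lemma inter_card (n : ℕ) :
    ((QA n) ∩ (QB n)).card = if Even n then n/2 - 1 else 0 := by
  split_ifs with hev
  · obtain ⟨a, rfl⟩ := hev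
    have key : ((QA (a+a)) ∩ (QB (a+a))).card = (Finset.Icc 1 (a-1)).card := by
      apply Finset.card_nbij' (i := fun t => t.1) (j := fun i => (i, a-i, i, a-i))
      · intro t ht
        obtain ⟨i, j, k, l⟩ := t
        simp only [QA, QB, PA, mem_coe, mem_inter, mem_filter] at ht ⊢
        simp [QA, QB, base, box4, mem_inter, mem_filter, mem_product, mem_range, mem_Icc]
          at ht ⊢
        omega
      · intro i hi
        simp only [QA, QB, PA, mem_coe, mem_inter, mem_filter] at hi ⊢
        simp [QA, QB, base, box4, mem_inter, mem_filter, mem_product, mem_range, mem_Icc]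
          at hi ⊢
        omega
      · intro t ht
        obtain ⟨i, j, k, l⟩ := t
        simp only [QA, QB, PA, mem_coe, mem_inter, mem_filter] at ht ⊢
        simp [QA, QB, base, box4, mem_inter, mem_filter, mem_product, mem_range,
          Prod.ext_iff] at ht ⊢
        omega
      · intro i hi
        rfl
    rw [key, Nat.card_Icc]
    omega
  · rw [Finset.card_eq_zero, Finset.eq_empty_iff_forall_notMem]
    intro t ht
    obtain ⟨i, j, k, l⟩ := t
    simp only [QA, QB, mem_inter, mem_filter] at ht
    simp [QA, QB, base, box4, mem_inter, mem_filter, mem_product, mem_range] at ht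
    rw [Nat.even_iff] at hev
    omega

lemma count_eq (n : ℕ) :
    (QQ n).card + (if Even n then n/2 - 1 else 0) = 2 * TT n := by
  have hU : QQ n = QA n ∪ QB n := by
    ext t
    simp only [QQ, QA, QB, mem_union, mem_filter]
    tauto
  have h := Finset.card_union_add_card_inter (QA n) (QB n)
  rw [inter_card n, QA_card, QB_card] at h
  rw [hU]
  omega

noncomputable def dd : ℕ → ℚ := fun m =>
  if Even m then (m+2)*(m+4)/8 else (m+1)*(m+3)/8

lemma dd_rec (m : ℕ) :
    dd (m+5) - dd (m+4) - (dd (m+3) + dd (m+3)) + (dd (m+2) + dd (m+2))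
      + dd (m+1) - dd m = 0 := by
  rcases Nat.even_or_odd m with ⟨a, rfl⟩ | ⟨a, rfl⟩ <;>
    simp [dd, parity_simps] <;> push_cast <;> ring

lemma inv_eq : (((1 - X)^3 * (1 + X)^2 : ℚ⟦X⟧))⁻¹ = PowerSeries.mk dd := by
  rw [PowerSeries.inv_eq_iff_mul_eq_one (by simp)]
  have h : PowerSeries.mk dd * ((1 - X)^3 * (1 + X)^2 : ℚ⟦X⟧)
      = PowerSeries.mk dd - X^1 * PowerSeries.mk dd
        - (X^2 * PowerSeries.mk dd + X^2 * PowerSeries.mk dd)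
        + (X^3 * PowerSeries.mk dd + X^3 * PowerSeries.mk dd)
        + X^4 * PowerSeries.mk dd - X^5 * PowerSeries.mk dd := by ring
  rw [h]
  ext n
  simp only [map_sub, map_add, coeff_X_pow_mul', coeff_mk, coeff_one]
  match n with
  | 0 => norm_num [dd, Nat.even_iff]
  | 1 => norm_num [dd, Nat.even_iff]
  | 2 => norm_num [dd, Nat.even_iff]
  | 3 => norm_num [dd, Nat.even_iff]
  | 4 => norm_num [dd, Nat.even_iff]
  | (m+5) =>
    have h1 : m+5-1 = m+4 := rfl
    have h2 : m+5-2 = m+3 := rfl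
    have h3 : m+5-3 = m+2 := rfl
    have h4 : m+5-4 = m+1 := rfl
    have h5 : m+5-5 = m := rfl
    simp only [h1, h2, h3, h4, h5, if_pos, Nat.add_eq_zero, if_neg]
    rw [if_pos (by omega), if_pos (by omega), if_pos (by omega), if_pos (by omega),
      if_pos (by omega), if_neg (by omega)]
    exact dd_rec m

lemma coeff_rhs (n : ℕ) (hn : 4 ≤ n) :
    PowerSeries.coeff n
        ((PowerSeries.X : PowerSeries ℚ) ^ 4 * (1 + 3 * PowerSeries.X) *
          (((1 - PowerSeries.X) ^ 3 * (1 + PowerSeries.X) ^ 2)⁻¹ : PowerSeries ℚ))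
      = dd (n-4) + (if 5 ≤ n then 3 * dd (n-5) else 0) := by
  rw [inv_eq]
  have h : (PowerSeries.X : PowerSeries ℚ) ^ 4 * (1 + 3 * PowerSeries.X) * PowerSeries.mk dd
      = X^4 * PowerSeries.mk dd + (X^5 * PowerSeries.mk dd + X^5 * PowerSeries.mk dd
        + X^5 * PowerSeries.mk dd) := by ring
  rw [h]
  simp only [map_add, coeff_X_pow_mul', coeff_mk]
  rcases Nat.lt_or_ge n 5 with h5 | h5
  · rw [if_pos hn, if_neg (show ¬ 5 ≤ n by omega), if_neg (show ¬ 5 ≤ n by omega)]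
    ring
  · rw [if_pos hn, if_pos (show 5 ≤ n from h5), if_pos (show 5 ≤ n from h5)]
    ring

lemma dd_even (m : ℕ) : dd (m+m) = ((m:ℚ)+m+2)*((m:ℚ)+m+4)/8 := by
  have h : Even (m+m) := ⟨m, rfl⟩
  simp only [dd, h, if_true]
  push_cast
  ring

lemma dd_odd (m : ℕ) : dd (m+m+1) = ((m:ℚ)+m+2)*((m:ℚ)+m+4)/8 := by
  have h : ¬ Even (m+m+1) := by simp [parity_simps]
  simp only [dd, h, if_false]
  push_cast
  ring

/-- For every `n ≥ 4`, the number of quadruples `(i, j, k, l)` of positive integers with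
`i + j + k + l = n` and (`i = k` or `j = l`) equals the coefficient of `z^n` in
`z^4(1 + 3z)/((1 - z)^3 (1 + z)^2)` in `ℚ⟦z⟧`. -/
theorem ambiguous_language_coeff (n : ℕ) (hn : 4 ≤ n) :
    (Nat.card {t : ℕ × ℕ × ℕ × ℕ //
        1 ≤ t.1 ∧ 1 ≤ t.2.1 ∧ 1 ≤ t.2.2.1 ∧ 1 ≤ t.2.2.2 ∧
        t.1 + t.2.1 + t.2.2.1 + t.2.2.2 = n ∧
        (t.1 = t.2.2.1 ∨ t.2.1 = t.2.2.2)} : ℚ) =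
      PowerSeries.coeff n
        ((PowerSeries.X : PowerSeries ℚ) ^ 4 * (1 + 3 * PowerSeries.X) *
          (((1 - PowerSeries.X) ^ 3 * (1 + PowerSeries.X) ^ 2)⁻¹ : PowerSeries ℚ)) := by
  have hsetQ : {t : ℕ × ℕ × ℕ × ℕ |
      1 ≤ t.1 ∧ 1 ≤ t.2.1 ∧ 1 ≤ t.2.2.1 ∧ 1 ≤ t.2.2.2 ∧
      t.1 + t.2.1 + t.2.2.1 + t.2.2.2 = n ∧
      (t.1 = t.2.2.1 ∨ t.2.1 = t.2.2.2)} = ↑(QQ n) := by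
    ext t
    obtain ⟨i, j, k, l⟩ := t
    simp only [QQ, mem_coe, mem_filter]
    simp [QQ, base, box4, Finset.mem_filter, Finset.mem_product, Finset.mem_range]
    omega
  have hcard : Nat.card {t : ℕ × ℕ × ℕ × ℕ //
      1 ≤ t.1 ∧ 1 ≤ t.2.1 ∧ 1 ≤ t.2.2.1 ∧ 1 ≤ t.2.2.2 ∧
      t.1 + t.2.1 + t.2.2.1 + t.2.2.2 = n ∧
      (t.1 = t.2.2.1 ∨ t.2.1 = t.2.2.2)} = (QQ n).card := by
    have h1 := Nat.card_coe_set_eq {t : ℕ × ℕ × ℕ × ℕ |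
      1 ≤ t.1 ∧ 1 ≤ t.2.1 ∧ 1 ≤ t.2.2.1 ∧ 1 ≤ t.2.2.2 ∧
      t.1 + t.2.1 + t.2.2.1 + t.2.2.2 = n ∧
      (t.1 = t.2.2.1 ∨ t.2.1 = t.2.2.2)}
    have h2 : ({t : ℕ × ℕ × ℕ × ℕ |
        1 ≤ t.1 ∧ 1 ≤ t.2.1 ∧ 1 ≤ t.2.2.1 ∧ 1 ≤ t.2.2.2 ∧
        t.1 + t.2.1 + t.2.2.1 + t.2.2.2 = n ∧
        (t.1 = t.2.2.1 ∨ t.2.1 = t.2.2.2)}).ncard = (QQ n).card := by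
      rw [hsetQ, Set.ncard_coe_finset]
    exact h1.trans h2
  rw [hcard, coeff_rhs n hn]
  rcases Nat.lt_or_ge n 5 with h5 | h5
  · have hn4 : n = 4 := by omega
    subst hn4
    rw [if_neg (by omega)]
    have hQ4 : QQ 4 = {(1,1,1,1)} := by
      ext t
      obtain ⟨i, j, k, l⟩ := t
      simp only [QQ, mem_filter]
      simp [QQ, base, box4, Finset.mem_filter, Finset.mem_product, Finset.mem_range,
        Prod.ext_iff]
      omega
    rw [hQ4]
    norm_num [dd]
  · rw [if_pos h5]
    have hce := count_eq n
    rcases Nat.even_or_odd n with ⟨a, rfl⟩ | ⟨a, rfl⟩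
    · obtain ⟨c, rfl⟩ : ∃ c, a = c + 3 := ⟨a - 3, by omega⟩
      have h4T := TT_even (c+3)
      rw [show (c+3)+(c+3)-2 = (c+2)+(c+2) from by omega] at h4T
      rw [if_pos (show Even ((c+3)+(c+3)) from ⟨c+3, rfl⟩),
        show ((c+3)+(c+3))/2 - 1 = c+2 from by omega] at hce
      rw [show (c+3)+(c+3)-4 = (c+1)+(c+1) from by omega,
        show (c+3)+(c+3)-5 = c+c+1 from by omega, dd_even, dd_odd]
      have hceQ := congrArg (Nat.cast : ℕ → ℚ) hce
      have h4TQ := congrArg (Nat.cast : ℕ → ℚ) h4T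
      push_cast at hceQ h4TQ ⊢
      linear_combination hceQ + h4TQ / 2
    · obtain ⟨c, rfl⟩ : ∃ c, a = c + 2 := ⟨a - 2, by omega⟩
      have h4T := TT_odd (c+2)
      rw [show 2*(c+2)-2 = 2*c+2 from by omega] at h4T
      rw [if_neg (by simp [parity_simps] : ¬ Even (2*(c+2)+1)), add_zero] at hce
      rw [show 2*(c+2)+1-4 = c+c+1 from by omega,
        show 2*(c+2)+1-5 = c+c from by omega, dd_odd, dd_even]
      have hceQ := congrArg (Nat.cast : ℕ → ℚ) hce
      have h4TQ := congrArg (Nat.cast : ℕ → ℚ) h4T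
      push_cast at hceQ h4TQ ⊢
      linear_combination hceQ + h4TQ / 2
end
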